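/- If Ω is an open strictly convex domain in RP^n, then every geodesic of the Hilbert metric d_Ω is a segment of a projective line. -/

import Mathlib

/-- The Hilbert distance between `x` and `y` in a bounded open convex domain
`Ω ⊂ ℝ^n` (viewed as an affine chart of `RP^n`) equals `d`: either `x = y` and `d = 0`,
or `x, y` lie on an open chord with endpoints `p, q ∈ Fr Ω`, with parameters
`s, t ∈ (0,1)`, and `d = (1/2)|log((s/(1-s))·((1-t)/t))|` (the cross-ratio formula). -/
def HilbertDistEq {n : ℕ} (Ω : Set (EuclideanSpace ℝ (Fin n)))
    (x y : EuclideanSpace ℝ (Fin n)) (d : ℝ) : Prop :=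
  (x = y ∧ d = 0) ∨
  ∃ p q : EuclideanSpace ℝ (Fin n), p ∈ frontier Ω ∧ q ∈ frontier Ω ∧
    ∃ s t : ℝ, s ∈ Set.Ioo (0:ℝ) 1 ∧ t ∈ Set.Ioo (0:ℝ) 1 ∧
      x = p + s • (q - p) ∧ y = p + t • (q - p) ∧
      d = |Real.log ((s / (1 - s)) * ((1 - t) / t))| / 2

section HilbertAux

variable {n : ℕ} {Ω : Set (EuclideanSpace ℝ (Fin n))}

private lemma frontier_notMem (hΩo : IsOpen Ω) {a : EuclideanSpace ℝ (Fin n)}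
    (ha : a ∈ frontier Ω) : a ∉ Ω := fun h => (hΩo.frontier_eq ▸ ha).2 h

/-- Affine evaluation identity for points on a parametrized chord. -/
private lemma affval (f : EuclideanSpace ℝ (Fin n) →L[ℝ] ℝ) (c s : ℝ)
    (p q : EuclideanSpace ℝ (Fin n)) :
    c - f (p + s • (q - p)) = (1 - s) * (c - f p) + s * (c - f q) := by
  simp only [map_add, map_smul, map_sub, smul_eq_mul]
  ring

/-- Supporting functional at a frontier point of an open convex set. -/
private lemma support (hΩo : IsOpen Ω) (hconv : Convex ℝ Ω)
    {q : EuclideanSpace ℝ (Fin n)} (hq : q ∈ frontier Ω) :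
    ∃ f : EuclideanSpace ℝ (Fin n) →L[ℝ] ℝ, ∃ c : ℝ,
      (∀ w ∈ Ω, f w < c) ∧ (∀ w ∈ closure Ω, f w ≤ c) ∧ f q = c := by
  have hqΩ : q ∉ Ω := frontier_notMem hΩo hq
  obtain ⟨f, hf⟩ := geometric_hahn_banach_open_point hconv hΩo hqΩ
  refine ⟨f, f q, hf, ?_, rfl⟩
  intro w hw
  exact closure_minimal (fun a ha => le_of_lt (hf a ha))
    (isClosed_le f.continuous continuous_const) hw

/-- Strict convexity: two frontier points on one supporting hyperplane coincide. -/
private lemma frontier_pt_eq (hΩo : IsOpen Ω) (hconv : Convex ℝ Ω)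
    (hstrict : ∀ p ∈ frontier Ω, ∀ q ∈ frontier Ω, p ≠ q →
      ¬ segment ℝ p q ⊆ frontier Ω)
    {f : EuclideanSpace ℝ (Fin n) →L[ℝ] ℝ} {c : ℝ}
    (hf : ∀ w ∈ Ω, f w < c) {a b : EuclideanSpace ℝ (Fin n)}
    (ha : a ∈ frontier Ω) (hb : b ∈ frontier Ω) (hfa : f a = c) (hfb : f b = c) :
    a = b := by
  by_contra hab
  refine hstrict a ha b hb hab ?_
  rintro w ⟨u, v, hu, hv, huv, rfl⟩
  have hwcl : u • a + v • b ∈ closure Ω :=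
    hconv.closure (frontier_subset_closure ha) (frontier_subset_closure hb) hu hv huv
  have hfw : f (u • a + v • b) = c := by
    simp only [map_add, map_smul, smul_eq_mul, hfa, hfb]
    linear_combination c * huv
  have hwΩ : u • a + v • b ∉ Ω := fun h => lt_irrefl c (hfw ▸ hf _ h)
  rw [hΩo.frontier_eq]
  exact ⟨hwcl, hwΩ⟩

/-- Hilbert distances are nonnegative. -/
private lemma hilbert_nonneg {x y : EuclideanSpace ℝ (Fin n)} {d : ℝ}
    (h : HilbertDistEq Ω x y d) : 0 ≤ d := by
  rcases h with ⟨_, rfl⟩ | ⟨p, q, _, _, s, t, _, _, _, _, rfl⟩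
  · exact le_refl 0
  · positivity

private lemma two_eq {a b A B : ℝ} (ha : 0 < a) (hb : 0 < b)
    (hA : a ≤ A) (hB : b ≤ B) (h : A * B = a * b) : A = a ∧ B = b := by
  have hbne : b ≠ 0 := ne_of_gt hb
  have h1 : A * b ≤ A * B :=
    mul_le_mul_of_nonneg_left hB (le_of_lt (lt_of_lt_of_le ha hA))
  have h2 : a * b ≤ A * b := mul_le_mul_of_nonneg_right hA (le_of_lt hb)
  have hAb : A * b = a * b := le_antisymm (by linarith) (by linarith)
  have hAa : A = a := mul_right_cancel₀ hbne hAb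
  refine ⟨hAa, ?_⟩
  have hAB : A * B = A * b := by rw [h, hAa]
  exact mul_left_cancel₀ (ne_of_gt (lt_of_lt_of_le ha hA)) hAB

/-- Equality in a product of four one-sided inequalities between positive reals
forces equality in each factor. -/
private lemma four_eq {u1 u2 u3 u4 v1 v2 v3 v4 : ℝ}
    (h1 : u1 ≤ v1) (h2 : u2 ≤ v2) (h3 : u3 ≤ v3) (h4 : u4 ≤ v4)
    (p1 : 0 < u1) (p2 : 0 < u2) (p3 : 0 < u3) (p4 : 0 < u4)
    (he : v1 * v2 * v3 * v4 = u1 * u2 * u3 * u4) :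
    v1 = u1 ∧ v2 = u2 ∧ v3 = u3 ∧ v4 = u4 := by
  have h12 : u1 * u2 ≤ v1 * v2 :=
    mul_le_mul h1 h2 (le_of_lt p2) (le_of_lt (lt_of_lt_of_le p1 h1))
  have h34 : u3 * u4 ≤ v3 * v4 :=
    mul_le_mul h3 h4 (le_of_lt p4) (le_of_lt (lt_of_lt_of_le p3 h3))
  have hmain : (v1 * v2) * (v3 * v4) = (u1 * u2) * (u3 * u4) := by
    linear_combination he
  obtain ⟨hA, hB⟩ := two_eq (mul_pos p1 p2) (mul_pos p3 p4) h12 h34 hmain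
  obtain ⟨e1, e2⟩ := two_eq p1 p2 h1 h2 hA
  obtain ⟨e3, e4⟩ := two_eq p3 p4 h3 h4 hB
  exact ⟨e1, e2, e3, e4⟩

/-- In the oriented case `s < t`, the cross-ratio distance formula gives
`exp (2 d) = ((1-s)t)/((1-t)s)`. -/
private lemma exp_formula {s t d : ℝ} (hs0 : 0 < s) (hst : s < t) (ht1 : t < 1)
    (hd : d = |Real.log ((s / (1 - s)) * ((1 - t) / t))| / 2) :
    Real.exp (2 * d) = ((1 - s) * t) / ((1 - t) * s) := by
  have hs1 : s < 1 := lt_trans hst ht1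
  have ht0 : 0 < t := lt_trans hs0 hst
  have h1s : 0 < 1 - s := by linarith
  have h1t : 0 < 1 - t := by linarith
  set R : ℝ := ((1 - s) * t) / ((1 - t) * s) with hR
  have hRpos : 0 < R := by positivity
  have hR1 : 1 ≤ R := by
    rw [hR, le_div_iff₀ (by positivity)]
    nlinarith
  have hIR : (s / (1 - s)) * ((1 - t) / t) = R⁻¹ := by
    rw [hR]
    field_simp
  have hlog : Real.log ((s / (1 - s)) * ((1 - t) / t)) = -Real.log R := by
    rw [hIR, Real.log_inv]
  have habs : |Real.log ((s / (1 - s)) * ((1 - t) / t))| = Real.log R := by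
    rw [hlog, abs_neg, abs_of_nonneg (Real.log_nonneg hR1)]
  rw [hd, habs, show 2 * (Real.log R / 2) = Real.log R by ring]
  exact Real.exp_log hRpos

/-- Normal form of a Hilbert-distance witness for distinct points: the chord can be
oriented so that `s < t`, and then `exp (2d)` is the (≥ 1) cross ratio. -/
private lemma hilbert_normalize (hΩo : IsOpen Ω)
    {x y : EuclideanSpace ℝ (Fin n)} {d : ℝ}
    (hxy : x ≠ y) (h : HilbertDistEq Ω x y d) :
    ∃ p q : EuclideanSpace ℝ (Fin n), ∃ s t : ℝ,
      p ∈ frontier Ω ∧ q ∈ frontier Ω ∧ 0 < s ∧ s < t ∧ t < 1 ∧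
      x = p + s • (q - p) ∧ y = p + t • (q - p) ∧
      Real.exp (2 * d) = ((1 - s) * t) / ((1 - t) * s) := by
  rcases h with ⟨rfl, _⟩ | ⟨p, q, hp, hq, s, t, ⟨hs0, hs1⟩, ⟨ht0, ht1⟩, hx', hy', hd⟩
  · exact absurd rfl hxy
  · have hst : s ≠ t := by
      rintro rfl
      exact hxy (hx'.trans hy'.symm)
    rcases lt_or_gt_of_ne hst with hlt | hgt
    · exact ⟨p, q, s, t, hp, hq, hs0, hlt, ht1, hx', hy', exp_formula hs0 hlt ht1 hd⟩
    · have hx'' : x = q + (1 - s) • (p - q) := by rw [hx']; module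
      have hy'' : y = q + (1 - t) • (p - q) := by rw [hy']; module
      have hd' : d = |Real.log (((1 - s) / (1 - (1 - s))) *
          ((1 - (1 - t)) / (1 - t)))| / 2 := by
        have hIinv : ((1 - s) / (1 - (1 - s))) * ((1 - (1 - t)) / (1 - t))
            = ((s / (1 - s)) * ((1 - t) / t))⁻¹ := by
          field_simp
          rw [sub_sub_cancel, sub_sub_cancel]
          exact mul_div_cancel_left₀ t hs0.ne'
        rw [hd, hIinv, Real.log_inv, abs_neg]
      have h1s : 0 < 1 - s := by linarith
      have hswap : 1 - s < 1 - t := by linarith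
      have h1t1 : 1 - t < 1 := by linarith
      exact ⟨q, p, 1 - s, 1 - t, hq, hp, h1s, hswap, h1t1, hx'', hy'',
        exp_formula h1s hswap h1t1 hd'⟩

end HilbertAux

set_option maxHeartbeats 1000000 in
/-- **Geodesics of the Hilbert metric are line segments.** If `Ω` is an open, bounded
(properly convex) and strictly convex domain (its frontier contains no segment), and
`y` lies on a Hilbert geodesic from `x` to `z` — equivalently, the triangle inequality
`d_Ω(x,y) + d_Ω(y,z) = d_Ω(x,z)` is an equality — then `y` lies on the straight line
segment from `x` to `z`.  (This is the standard equivalent formulation of: every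
geodesic of `d_Ω`, i.e. every curve whose length is the distance between its endpoints,
is a segment of a projective line.) -/
theorem hilbert_geodesics_are_lines (n : ℕ) (Ω : Set (EuclideanSpace ℝ (Fin n)))
    (hΩo : IsOpen Ω) (hΩb : Bornology.IsBounded Ω) (hconv : Convex ℝ Ω)
    (hne : Ω.Nonempty)
    (hstrict : ∀ p ∈ frontier Ω, ∀ q ∈ frontier Ω, p ≠ q →
      ¬ segment ℝ p q ⊆ frontier Ω)
    (x y z : EuclideanSpace ℝ (Fin n)) (hx : x ∈ Ω) (hy : y ∈ Ω) (hz : z ∈ Ω)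
    (d₁ d₂ d₃ : ℝ)
    (h1 : HilbertDistEq Ω x y d₁) (h2 : HilbertDistEq Ω y z d₂)
    (h3 : HilbertDistEq Ω x z d₃) (hsum : d₁ + d₂ = d₃) :
    y ∈ segment ℝ x z := by
  by_cases hxy : x = y
  · subst hxy; exact left_mem_segment ℝ x z
  by_cases hyz : y = z
  · subst hyz; exact right_mem_segment ℝ x y
  -- normalize the two chords
  obtain ⟨p₁, q₁, s₁, t₁, hp₁, hq₁, hs₁0, hst₁, ht₁1, hx1, hy1, hE1⟩ :=
    hilbert_normalize hΩo hxy h1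
  obtain ⟨p₂, q₂, s₂, t₂, hp₂, hq₂, hs₂0, hst₂, ht₂1, hy2, hz2, hE2⟩ :=
    hilbert_normalize hΩo hyz h2
  by_cases hxz : x = z
  · -- degenerate case: impossible since d₁ > 0 but d₃ = 0
    exfalso
    have hd3 : d₃ = 0 := by
      rcases h3 with ⟨_, h⟩ | ⟨p, q, hp, hq, s, t, ⟨hs0, hs1⟩, ⟨ht0, ht1⟩, hx', hz', hd⟩
      · exact h
      · have hpq : q - p ≠ 0 := by
          intro h0
          have hxp : x = p := by rw [hx', h0, smul_zero, add_zero]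
          exact frontier_notMem hΩo hp (hxp ▸ hx)
        have hst : s = t := by
          have heq : p + s • (q - p) = p + t • (q - p) := by
            rw [← hx', ← hz', hxz]
          have h' : (s - t) • (q - p) = 0 := by
            rw [sub_smul, add_left_cancel heq, sub_self]
          rcases smul_eq_zero.mp h' with h0 | h0
          · exact sub_eq_zero.mp h0
          · exact absurd h0 hpq
        rw [hd, hst]
        have hone : (t / (1 - t)) * ((1 - t) / t) = 1 := by
          rw [div_mul_div_comm, mul_comm t (1 - t)]
          exact div_self (ne_of_gt (by nlinarith))
        rw [hone, Real.log_one, abs_zero]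
        norm_num
    have hd1pos : 0 < d₁ := by
      have hR1 : 1 < ((1 - s₁) * t₁) / ((1 - t₁) * s₁) := by
        rw [one_lt_div (mul_pos (by linarith) hs₁0)]
        nlinarith
      have hexp : Real.exp 0 < Real.exp (2 * d₁) := by
        rw [Real.exp_zero, hE1]; exact hR1
      linarith [Real.exp_lt_exp.mp hexp]
    have hd2 : 0 ≤ d₂ := hilbert_nonneg h2
    linarith
  obtain ⟨p₃, q₃, s₃, t₃, hp₃, hq₃, hs₃0, hst₃, ht₃1, hx3, hz3, hE3⟩ :=
    hilbert_normalize hΩo hxz h3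
  -- basic bounds
  have hs₁1 : s₁ < 1 := lt_trans hst₁ ht₁1
  have ht₁0 : 0 < t₁ := lt_trans hs₁0 hst₁
  have hs₂1 : s₂ < 1 := lt_trans hst₂ ht₂1
  have ht₂0 : 0 < t₂ := lt_trans hs₂0 hst₂
  have hs₃1 : s₃ < 1 := lt_trans hst₃ ht₃1
  have ht₃0 : 0 < t₃ := lt_trans hs₃0 hst₃
  -- the cross-ratio multiplicativity from d₁ + d₂ = d₃
  have hRR : ((1 - s₃) * t₃) / ((1 - t₃) * s₃)
      = (((1 - s₁) * t₁) / ((1 - t₁) * s₁)) * (((1 - s₂) * t₂) / ((1 - t₂) * s₂)) := by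
    rw [← hE1, ← hE2, ← hE3, ← Real.exp_add]
    exact congrArg Real.exp (by linarith)
  have hr : (1 - s₃) * t₃ * ((1 - t₁) * s₁) * ((1 - t₂) * s₂)
      = (1 - t₃) * s₃ * ((1 - s₁) * t₁) * ((1 - s₂) * t₂) := by
    rw [div_mul_div_comm, div_eq_div_iff
      (mul_pos (by linarith : (0:ℝ) < 1 - t₃) hs₃0).ne'
      (mul_pos (mul_pos (by linarith : (0:ℝ) < 1 - t₁) hs₁0)
        (mul_pos (by linarith : (0:ℝ) < 1 - t₂) hs₂0)).ne'] at hRR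
    linear_combination hRR
  -- supporting functionals at the endpoints of the chord through x and z
  obtain ⟨f, c, hfΩ, hfcl, hfq3⟩ := support hΩo hconv hq₃
  obtain ⟨g, e, hgΩ, hgcl, hgp3⟩ := support hΩo hconv hp₃
  have hfq3' : c - f q₃ = 0 := by rw [hfq3, sub_self]
  have hgp3' : e - g p₃ = 0 := by rw [hgp3, sub_self]
  -- affine evaluations
  have aX1 : c - f x = (1 - s₁) * (c - f p₁) + s₁ * (c - f q₁) := by
    rw [hx1]; exact affval f c s₁ p₁ q₁
  have aY1 : c - f y = (1 - t₁) * (c - f p₁) + t₁ * (c - f q₁) := by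
    rw [hy1]; exact affval f c t₁ p₁ q₁
  have aY2 : c - f y = (1 - s₂) * (c - f p₂) + s₂ * (c - f q₂) := by
    rw [hy2]; exact affval f c s₂ p₂ q₂
  have aZ2 : c - f z = (1 - t₂) * (c - f p₂) + t₂ * (c - f q₂) := by
    rw [hz2]; exact affval f c t₂ p₂ q₂
  have aX3 : c - f x = (1 - s₃) * (c - f p₃) + s₃ * (c - f q₃) := by
    rw [hx3]; exact affval f c s₃ p₃ q₃
  have aZ3 : c - f z = (1 - t₃) * (c - f p₃) + t₃ * (c - f q₃) := by
    rw [hz3]; exact affval f c t₃ p₃ q₃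
  have bX1 : e - g x = (1 - s₁) * (e - g p₁) + s₁ * (e - g q₁) := by
    rw [hx1]; exact affval g e s₁ p₁ q₁
  have bY1 : e - g y = (1 - t₁) * (e - g p₁) + t₁ * (e - g q₁) := by
    rw [hy1]; exact affval g e t₁ p₁ q₁
  have bY2 : e - g y = (1 - s₂) * (e - g p₂) + s₂ * (e - g q₂) := by
    rw [hy2]; exact affval g e s₂ p₂ q₂
  have bZ2 : e - g z = (1 - t₂) * (e - g p₂) + t₂ * (e - g q₂) := by
    rw [hz2]; exact affval g e t₂ p₂ q₂
  have bX3 : e - g x = (1 - s₃) * (e - g p₃) + s₃ * (e - g q₃) := by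
    rw [hx3]; exact affval g e s₃ p₃ q₃
  have bZ3 : e - g z = (1 - t₃) * (e - g p₃) + t₃ * (e - g q₃) := by
    rw [hz3]; exact affval g e t₃ p₃ q₃
  -- positivity
  have pX : 0 < c - f x := sub_pos.2 (hfΩ x hx)
  have pY : 0 < c - f y := sub_pos.2 (hfΩ y hy)
  have pZ : 0 < c - f z := sub_pos.2 (hfΩ z hz)
  have pX' : 0 < e - g x := sub_pos.2 (hgΩ x hx)
  have pY' : 0 < e - g y := sub_pos.2 (hgΩ y hy)
  have pZ' : 0 < e - g z := sub_pos.2 (hgΩ z hz)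
  -- frontier points lie weakly below the hyperplanes
  have nQ1 : f q₁ ≤ c := hfcl q₁ (frontier_subset_closure hq₁)
  have nQ2 : f q₂ ≤ c := hfcl q₂ (frontier_subset_closure hq₂)
  have nP1 : g p₁ ≤ e := hgcl p₁ (frontier_subset_closure hp₁)
  have nP2 : g p₂ ≤ e := hgcl p₂ (frontier_subset_closure hp₂)
  -- exact Funk-type identities
  have hi1 : (c - f y) * (1 - s₁) - (c - f x) * (1 - t₁) = (t₁ - s₁) * (c - f q₁) := by
    linear_combination (1 - s₁) * aY1 - (1 - t₁) * aX1
  have hi2 : (c - f z) * (1 - s₂) - (c - f y) * (1 - t₂) = (t₂ - s₂) * (c - f q₂) := by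
    linear_combination (1 - s₂) * aZ2 - (1 - t₂) * aY2
  have hi3 : (e - g x) * t₁ - (e - g y) * s₁ = (t₁ - s₁) * (e - g p₁) := by
    linear_combination t₁ * bX1 - s₁ * bY1
  have hi4 : (e - g y) * t₂ - (e - g z) * s₂ = (t₂ - s₂) * (e - g p₂) := by
    linear_combination t₂ * bY2 - s₂ * bZ2
  have he3 : (c - f x) * (1 - t₃) = (c - f z) * (1 - s₃) := by
    linear_combination (1 - t₃) * aX3 - (1 - s₃) * aZ3
      + ((1 - t₃) * s₃ - (1 - s₃) * t₃) * hfq3'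
  have he3' : (e - g z) * s₃ = (e - g x) * t₃ := by
    linear_combination s₃ * bZ3 - t₃ * bX3 + (s₃ - t₃) * hgp3'
  -- the Funk inequalities
  have hu1 : (c - f x) * (1 - t₁) ≤ (c - f y) * (1 - s₁) := by
    linarith [hi1, mul_nonneg (by linarith : (0:ℝ) ≤ t₁ - s₁) (by linarith : (0:ℝ) ≤ c - f q₁)]
  have hu2 : (c - f y) * (1 - t₂) ≤ (c - f z) * (1 - s₂) := by
    linarith [hi2, mul_nonneg (by linarith : (0:ℝ) ≤ t₂ - s₂) (by linarith : (0:ℝ) ≤ c - f q₂)]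
  have hu3 : (e - g y) * s₁ ≤ (e - g x) * t₁ := by
    linarith [hi3, mul_nonneg (by linarith : (0:ℝ) ≤ t₁ - s₁) (by linarith : (0:ℝ) ≤ e - g p₁)]
  have hu4 : (e - g z) * s₂ ≤ (e - g y) * t₂ := by
    linarith [hi4, mul_nonneg (by linarith : (0:ℝ) ≤ t₂ - s₂) (by linarith : (0:ℝ) ≤ e - g p₂)]
  have pu1 : 0 < (c - f x) * (1 - t₁) := mul_pos pX (by linarith)
  have pu2 : 0 < (c - f y) * (1 - t₂) := mul_pos pY (by linarith)
  have pu3 : 0 < (e - g y) * s₁ := mul_pos pY' hs₁0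
  have pu4 : 0 < (e - g z) * s₂ := mul_pos pZ' hs₂0
  -- equality of the product, from d₁ + d₂ = d₃
  have hpos3 : (0:ℝ) < (1 - t₃) * s₃ := mul_pos (by linarith) hs₃0
  have hcancel : ((1 - t₃) * s₃) *
      (((c - f y) * (1 - s₁)) * ((c - f z) * (1 - s₂)) * ((e - g x) * t₁) * ((e - g y) * t₂))
      = ((1 - t₃) * s₃) *
      (((c - f x) * (1 - t₁)) * ((c - f y) * (1 - t₂)) * ((e - g y) * s₁) * ((e - g z) * s₂)) := by
    linear_combination
      (-((e - g z) * s₃ * (c - f y) * (e - g y) * (1 - t₁) * (1 - t₂) * s₁ * s₂)) * he3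
      + (-((c - f z) * (1 - s₃) * (c - f y) * (e - g y) * (1 - t₁) * (1 - t₂) * s₁ * s₂)) * he3'
      + (-((c - f z) * (e - g x) * (c - f y) * (e - g y))) * hr
  have huv := mul_left_cancel₀ (ne_of_gt hpos3) hcancel
  obtain ⟨E1, E2, E3, E4⟩ := four_eq hu1 hu2 hu3 hu4 pu1 pu2 pu3 pu4 huv
  -- extract the supporting incidences
  have hfq1 : f q₁ = c := by
    have h0 : (t₁ - s₁) * (c - f q₁) = 0 := by linarith
    rcases mul_eq_zero.mp h0 with h0 | h0
    · exact absurd h0 (sub_ne_zero.mpr hst₁.ne')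
    · linarith
  have hfq2 : f q₂ = c := by
    have h0 : (t₂ - s₂) * (c - f q₂) = 0 := by linarith
    rcases mul_eq_zero.mp h0 with h0 | h0
    · exact absurd h0 (sub_ne_zero.mpr hst₂.ne')
    · linarith
  have hgp1 : g p₁ = e := by
    have h0 : (t₁ - s₁) * (e - g p₁) = 0 := by linarith
    rcases mul_eq_zero.mp h0 with h0 | h0
    · exact absurd h0 (sub_ne_zero.mpr hst₁.ne')
    · linarith
  have hgp2 : g p₂ = e := by
    have h0 : (t₂ - s₂) * (e - g p₂) = 0 := by linarith
    rcases mul_eq_zero.mp h0 with h0 | h0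
    · exact absurd h0 (sub_ne_zero.mpr hst₂.ne')
    · linarith
  -- strict convexity: the chords share their endpoints
  have q13 : q₁ = q₃ := frontier_pt_eq hΩo hconv hstrict hfΩ hq₁ hq₃ hfq1 hfq3
  have q23 : q₂ = q₃ := frontier_pt_eq hΩo hconv hstrict hfΩ hq₂ hq₃ hfq2 hfq3
  have p13 : p₁ = p₃ := frontier_pt_eq hΩo hconv hstrict hgΩ hp₁ hp₃ hgp1 hgp3
  have p23 : p₂ = p₃ := frontier_pt_eq hΩo hconv hstrict hgΩ hp₂ hp₃ hgp2 hgp3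
  rw [q13, p13] at hx1 hy1
  rw [q23, p23] at hy2 hz2
  -- collinearity bookkeeping
  have hv : q₃ - p₃ ≠ 0 := by
    intro h0
    have hxp : x = p₃ := by rw [hx3, h0, smul_zero, add_zero]
    exact frontier_notMem hΩo hp₃ (hxp ▸ hx)
  have cancel : ∀ a b : ℝ, p₃ + a • (q₃ - p₃) = p₃ + b • (q₃ - p₃) → a = b := by
    intro a b hab
    have h' : (a - b) • (q₃ - p₃) = 0 := by
      rw [sub_smul, add_left_cancel hab, sub_self]
    rcases smul_eq_zero.mp h' with h0 | h0
    · exact sub_eq_zero.mp h0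
    · exact absurd h0 hv
  have hs13 : s₁ = s₃ := cancel _ _ (hx1.symm.trans hx3)
  have ht1s2 : t₁ = s₂ := cancel _ _ (hy1.symm.trans hy2)
  have ht23 : t₂ = t₃ := cancel _ _ (hz2.symm.trans hz3)
  -- conclude: y is on the segment [x, z]
  have hlt1 : s₃ < t₁ := hs13 ▸ hst₁
  have hlt2 : t₁ < t₃ := by rw [ht1s2]; rw [← ht23]; exact hst₂
  have hD : (0:ℝ) < t₃ - s₃ := by linarith
  refine ⟨(t₃ - t₁) / (t₃ - s₃), (t₁ - s₃) / (t₃ - s₃),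
    div_nonneg (by linarith) (le_of_lt hD), div_nonneg (by linarith) (le_of_lt hD), ?_, ?_⟩
  · field_simp
    ring
  · have hab : (t₃ - t₁) / (t₃ - s₃) + (t₁ - s₃) / (t₃ - s₃) = 1 := by field_simp; ring
    have hcomb : ((t₃ - t₁) / (t₃ - s₃)) * s₃ + ((t₁ - s₃) / (t₃ - s₃)) * t₃ = t₁ := by
      field_simp
      ring
    have hmod : ((t₃ - t₁) / (t₃ - s₃)) • (p₃ + s₃ • (q₃ - p₃))
        + ((t₁ - s₃) / (t₃ - s₃)) • (p₃ + t₃ • (q₃ - p₃))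
        = ((t₃ - t₁) / (t₃ - s₃) + (t₁ - s₃) / (t₃ - s₃)) • p₃
          + (((t₃ - t₁) / (t₃ - s₃)) * s₃ + ((t₁ - s₃) / (t₃ - s₃)) * t₃) • (q₃ - p₃) := by
      module
    rw [hx3, hz3, hy1, hmod, hab, hcomb, one_smul]
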